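/- Under the stated IBCN assumptions, given ε ∈ (0,1], let K_ε = {k ≥ 0 : ‖∇f(x_k)‖ ≥ ε} and let S = {k : ρ_k ≥ η₁} be the successful iterations. Then |K_ε ∩ S| ≤ ((f(x₀) − f_min)/c₁) ε^{−2}, where c₁ = θ η₁ (1 − β) min{θβ/H_max, √(3θβ/σ_max)}. -/

import Mathlib

open scoped RealInnerProductSpace

noncomputable section

/-- `U_I`: extension by zero from block coordinates to full coordinates. -/
def blockIncl {n : ℕ} (I : Finset (Fin n)) :
    EuclideanSpace ℝ ↥I →ₗ[ℝ] EuclideanSpace ℝ (Fin n) where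
  toFun s := WithLp.toLp 2 (fun i => if h : i ∈ I then s ⟨i, h⟩ else 0)
  map_add' s t := by ext i; by_cases h : i ∈ I <;> simp [h]
  map_smul' c s := by ext i; by_cases h : i ∈ I <;> simp [h]

/-- `U_Iᵀ`: restriction of a vector to the block coordinates. -/
def blockRestr {n : ℕ} (I : Finset (Fin n)) :
    EuclideanSpace ℝ (Fin n) →ₗ[ℝ] EuclideanSpace ℝ ↥I where
  toFun x := WithLp.toLp 2 (fun i => x i)
  map_add' x y := by ext i; simp
  map_smul' c x := by ext i; simp

/-- Block Hessian `U_Iᵀ H U_I` as a continuous linear map. -/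
def blockHess {n : ℕ} (I : Finset (Fin n))
    (H : EuclideanSpace ℝ (Fin n) →L[ℝ] EuclideanSpace ℝ (Fin n)) :
    EuclideanSpace ℝ ↥I →L[ℝ] EuclideanSpace ℝ ↥I :=
  LinearMap.toContinuousLinearMap
    ((blockRestr I) ∘ₗ ((H : EuclideanSpace ℝ (Fin n) →ₗ[ℝ] EuclideanSpace ℝ (Fin n)) ∘ₗ blockIncl I))

/-- Quadratic model `q(s) = f₀ + gᵀs + (1/2) sᵀ H s`. -/
def quadModel {E : Type*} [NormedAddCommGroup E] [InnerProductSpace ℝ E]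
    (f₀ : ℝ) (g : E) (H : E →L[ℝ] E) (s : E) : ℝ :=
  f₀ + ⟪g, s⟫ + (1 / 2) * ⟪s, H s⟫

/-- Cubic model `m(s) = q(s) + (σ/6) ‖s‖³`. -/
def cubicModel {E : Type*} [NormedAddCommGroup E] [InnerProductSpace ℝ E]
    (f₀ : ℝ) (g : E) (H : E →L[ℝ] E) (σ : ℝ) (s : E) : ℝ :=
  quadModel f₀ g H s + σ / 6 * ‖s‖ ^ 3

/-- Gradient of the cubic model: `∇m(s) = g + H s + (σ/2) ‖s‖ s`. -/
def cubicModelGrad {E : Type*} [NormedAddCommGroup E] [InnerProductSpace ℝ E]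
    (g : E) (H : E →L[ℝ] E) (σ : ℝ) (s : E) : E :=
  g + H s + (σ / 2 * ‖s‖) • s

/-- The stepsize `α̂ = min{β/‖H‖, √(3β/(σ‖g‖))}`, the first argument being `+∞` if `H = 0`. -/
def alphaHat {E : Type*} [NormedAddCommGroup E] [InnerProductSpace ℝ E]
    (β σ : ℝ) (g : E) (H : E →L[ℝ] E) : ℝ :=
  haveI := Classical.dec (H = 0)
  if H = 0 then Real.sqrt (3 * β / (σ * ‖g‖))
  else min (β / ‖H‖) (Real.sqrt (3 * β / (σ * ‖g‖)))

/-- The Cauchy-like point `ŝ = -α̂ g`. -/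
def sHat {E : Type*} [NormedAddCommGroup E] [InnerProductSpace ℝ E]
    (β σ : ℝ) (g : E) (H : E →L[ℝ] E) : E :=
  -(alphaHat β σ g H) • g

section Block
variable {n : ℕ} (I : Finset (Fin n))

lemma blockIncl_apply (s : EuclideanSpace ℝ ↥I) (i : Fin n) :
    blockIncl I s i = if h : i ∈ I then s ⟨i, h⟩ else 0 := rfl

lemma blockRestr_apply (y : EuclideanSpace ℝ (Fin n)) (i : ↥I) :
    blockRestr I y i = y i.val := rfl

lemma blockRestr_blockIncl (s : EuclideanSpace ℝ ↥I) :
    blockRestr I (blockIncl I s) = s := by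
  ext i
  simp [blockRestr_apply, blockIncl_apply, i.2]

lemma inner_blockIncl (s : EuclideanSpace ℝ ↥I) (y : EuclideanSpace ℝ (Fin n)) :
    ⟪blockIncl I s, y⟫ = ⟪s, blockRestr I y⟫ := by
  simp only [PiLp.inner_apply, RCLike.inner_apply, conj_trivial]
  rw [← Finset.sum_subset I.subset_univ
    (fun i _ hi => by simp [blockIncl_apply, hi]),
    ← Finset.sum_attach I (fun i => y i * blockIncl I s i), Finset.univ_eq_attach]
  exact Finset.sum_congr rfl fun i _ => by simp [blockIncl_apply, blockRestr_apply, i.2]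

lemma norm_blockIncl (s : EuclideanSpace ℝ ↥I) : ‖blockIncl I s‖ = ‖s‖ := by
  have h := inner_blockIncl I s (blockIncl I s)
  rw [blockRestr_blockIncl] at h
  have e1 := real_inner_self_eq_norm_sq (blockIncl I s)
  have e2 := real_inner_self_eq_norm_sq s
  nlinarith [norm_nonneg (blockIncl I s), norm_nonneg s]

lemma norm_blockRestr_le (y : EuclideanSpace ℝ (Fin n)) :
    ‖blockRestr I y‖ ≤ ‖y‖ := by
  rcases eq_or_ne (blockRestr I y) 0 with h | h
  · simp [h]
  · have h1 : ⟪blockIncl I (blockRestr I y), y⟫ = ⟪blockRestr I y, blockRestr I y⟫ := by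
      rw [inner_blockIncl]
    have h2 : ⟪blockIncl I (blockRestr I y), y⟫ ≤ ‖blockIncl I (blockRestr I y)‖ * ‖y‖ :=
      real_inner_le_norm _ _
    rw [norm_blockIncl] at h2
    have h3 := real_inner_self_eq_norm_sq (blockRestr I y)
    have h4 : 0 < ‖blockRestr I y‖ := norm_pos_iff.mpr h
    nlinarith

lemma norm_blockHess_le (H : EuclideanSpace ℝ (Fin n) →L[ℝ] EuclideanSpace ℝ (Fin n)) :
    ‖blockHess I H‖ ≤ ‖H‖ := by
  refine ContinuousLinearMap.opNorm_le_bound _ (norm_nonneg H) fun s => ?_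
  have h : blockHess I H s = blockRestr I (H (blockIncl I s)) := rfl
  rw [h]
  calc ‖blockRestr I (H (blockIncl I s))‖ ≤ ‖H (blockIncl I s)‖ := norm_blockRestr_le I _
    _ ≤ ‖H‖ * ‖blockIncl I s‖ := H.le_opNorm _
    _ = ‖H‖ * ‖s‖ := by rw [norm_blockIncl]

lemma inner_blockHess (H : EuclideanSpace ℝ (Fin n) →L[ℝ] EuclideanSpace ℝ (Fin n))
    (s t : EuclideanSpace ℝ ↥I) :
    ⟪s, blockHess I H t⟫ = ⟪blockIncl I s, H (blockIncl I t)⟫ := by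
  have h : blockHess I H t = blockRestr I (H (blockIncl I t)) := rfl
  rw [h, ← inner_blockIncl]

end Block

section Model
variable {E : Type*} [NormedAddCommGroup E] [InnerProductSpace ℝ E]

lemma alphaHat_le_sqrt (β σ : ℝ) (g : E) (H : E →L[ℝ] E) :
    alphaHat β σ g H ≤ Real.sqrt (3 * β / (σ * ‖g‖)) := by
  unfold alphaHat
  split_ifs
  · exact le_refl _
  · exact min_le_right _ _

lemma alphaHat_pos (β σ : ℝ) (hβ0 : 0 < β) (hσ : 0 < σ) (g : E) (hg : g ≠ 0)
    (H : E →L[ℝ] E) : 0 < alphaHat β σ g H := by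
  have hgpos : 0 < ‖g‖ := norm_pos_iff.mpr hg
  have hs : 0 < Real.sqrt (3 * β / (σ * ‖g‖)) := Real.sqrt_pos.mpr (by positivity)
  unfold alphaHat
  split_ifs with h
  · exact hs
  · exact lt_min (div_pos hβ0 (norm_pos_iff.mpr h)) hs

lemma model_decrease (f₀ β σ : ℝ) (hβ0 : 0 < β) (hσ : 0 < σ) (g : E) (hg : g ≠ 0)
    (H : E →L[ℝ] E) :
    cubicModel f₀ g H σ (sHat β σ g H) ≤
      f₀ - (1 - β) * alphaHat β σ g H * ‖g‖ ^ 2 := by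
  set α := alphaHat β σ g H with hα
  have hgpos : 0 < ‖g‖ := norm_pos_iff.mpr hg
  have hαpos : 0 < α := alphaHat_pos β σ hβ0 hσ g hg H
  have hsq : α ^ 2 ≤ 3 * β / (σ * ‖g‖) := by
    have hle : α ≤ Real.sqrt (3 * β / (σ * ‖g‖)) := alphaHat_le_sqrt β σ g H
    calc α ^ 2 ≤ Real.sqrt (3 * β / (σ * ‖g‖)) ^ 2 := by
          exact pow_le_pow_left₀ hαpos.le hle 2
      _ = 3 * β / (σ * ‖g‖) := Real.sq_sqrt (by positivity)
  have hquad : quadModel f₀ g H (sHat β σ g H) =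
      f₀ - α * ‖g‖ ^ 2 + α ^ 2 / 2 * ⟪g, H g⟫ := by
    simp only [quadModel, sHat, ← hα, real_inner_smul_right, real_inner_smul_left,
      map_smul, real_inner_self_eq_norm_sq]
    ring
  have hnorm : ‖sHat β σ g H‖ = α * ‖g‖ := by
    rw [sHat, ← hα, norm_smul, norm_neg, Real.norm_eq_abs, abs_of_pos hαpos]
  have h1 : ⟪g, H g⟫ ≤ ‖H‖ * ‖g‖ ^ 2 := by
    calc ⟪g, H g⟫ ≤ ‖g‖ * ‖H g‖ := real_inner_le_norm _ _
      _ ≤ ‖g‖ * (‖H‖ * ‖g‖) := by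
          exact mul_le_mul_of_nonneg_left (H.le_opNorm g) hgpos.le
      _ = ‖H‖ * ‖g‖ ^ 2 := by ring
  have h2 : α ^ 2 / 2 * ⟪g, H g⟫ ≤ β / 2 * α * ‖g‖ ^ 2 := by
    rcases eq_or_ne H 0 with h | h
    · subst h
      simp only [ContinuousLinearMap.zero_apply, inner_zero_right, mul_zero]
      positivity
    · have hHpos : 0 < ‖H‖ := norm_pos_iff.mpr h
      have hαle : α ≤ β / ‖H‖ := by
        rw [hα]; unfold alphaHat; split_ifs with h'
        · exact absurd h' h
        · exact min_le_left _ _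
      have hαH : α * ‖H‖ ≤ β := by
        rw [← le_div_iff₀ hHpos]; exact hαle
      have hA : α ^ 2 / 2 * ⟪g, H g⟫ ≤ α ^ 2 / 2 * (‖H‖ * ‖g‖ ^ 2) :=
        mul_le_mul_of_nonneg_left h1 (by positivity)
      have hB : α * ‖H‖ * (α * ‖g‖ ^ 2) ≤ β * (α * ‖g‖ ^ 2) :=
        mul_le_mul_of_nonneg_right hαH (by positivity)
      nlinarith [hA, hB]
  have h3 : σ / 6 * (α * ‖g‖) ^ 3 ≤ β / 2 * α * ‖g‖ ^ 2 := by
    have h4 : α ^ 2 * (σ * ‖g‖) ≤ 3 * β := (le_div_iff₀ (by positivity)).mp hsq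
    nlinarith [mul_le_mul_of_nonneg_right h4 (by positivity : (0:ℝ) ≤ α * ‖g‖ ^ 2 / 6)]
  have : cubicModel f₀ g H σ (sHat β σ g H) =
      quadModel f₀ g H (sHat β σ g H) + σ / 6 * (α * ‖g‖) ^ 3 := by
    rw [cubicModel, hnorm]
  rw [this, hquad]
  nlinarith

end Model

section Taylor
variable {E : Type*} [NormedAddCommGroup E] [InnerProductSpace ℝ E] [CompleteSpace E]

lemma taylor_two (f : E → ℝ) (gradf : E → E) (hessf : E → E →L[ℝ] E)
    (hgradf : ∀ y, HasGradientAt f (gradf y) y)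
    (hhessf : ∀ y, HasFDerivAt gradf (hessf y) y)
    (L : ℝ) (hL : 0 ≤ L) (hlip : ∀ y z, ‖hessf y - hessf z‖ ≤ L * ‖y - z‖)
    (x h : E) :
    |f (x + h) - f x - ⟪gradf x, h⟫ - 1 / 2 * ⟪h, hessf x h⟫| ≤ L / 6 * ‖h‖ ^ 3 := by
  have hc : ∀ t : ℝ, HasDerivAt (fun u : ℝ => x + u • h) h t := fun t => by
    simpa using ((hasDerivAt_id t).smul_const h).const_add x
  set ψ : ℝ → ℝ := fun t => ⟪gradf (x + t • h), h⟫ with hψdef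
  set χ : ℝ → ℝ := fun t => ⟪hessf (x + t • h) h, h⟫ with hχdef
  have hφ : ∀ t : ℝ, HasDerivAt (fun u : ℝ => f (x + u • h)) (ψ t) t := by
    intro t
    have := ((hgradf (x + t • h)).hasFDerivAt).comp_hasDerivAt t (hc t)
    simpa [hψdef, InnerProductSpace.toDual_apply_apply, Function.comp_def] using this
  have hψ : ∀ t : ℝ, HasDerivAt ψ (χ t) t := by
    intro t
    have hG : HasDerivAt (fun u : ℝ => gradf (x + u • h)) (hessf (x + t • h) h) t :=
      (hhessf (x + t • h)).comp_hasDerivAt t (hc t)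
    have := hG.inner ℝ (hasDerivAt_const t h)
    simpa [hψdef, hχdef] using this
  have hψcont : Continuous ψ := by
    rw [continuous_iff_continuousAt]; exact fun t => (hψ t).continuousAt
  have hhesscont : Continuous hessf := by
    rw [continuous_iff_continuousAt]
    intro y
    rw [Metric.continuousAt_iff]
    intro ε hε
    rcases eq_or_lt_of_le hL with hL0 | hLpos
    · exact ⟨1, one_pos, fun z _ => by
        have := hlip z y
        rw [← hL0] at this
        simpa [dist_eq_norm] using lt_of_le_of_lt (by simpa using this) hε⟩
    · refine ⟨ε / L, by positivity, fun z hz => ?_⟩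
      rw [dist_eq_norm] at *
      calc ‖hessf z - hessf y‖ ≤ L * ‖z - y‖ := hlip z y
        _ < L * (ε / L) := by exact mul_lt_mul_of_pos_left hz hLpos
        _ = ε := by field_simp
  have hχcont : Continuous χ := by
    apply Continuous.inner
    · exact (ContinuousLinearMap.apply ℝ E h).continuous.comp
        (hhesscont.comp (continuous_const.add (continuous_id.smul continuous_const)))
    · exact continuous_const
  have hχbound : ∀ u : ℝ, 0 ≤ u → |χ u - χ 0| ≤ L * u * ‖h‖ ^ 3 := by
    intro u hu
    have e1 : χ u - χ 0 = ⟪(hessf (x + u • h) - hessf x) h, h⟫ := by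
      simp [hχdef, ContinuousLinearMap.sub_apply, inner_sub_left]
    rw [e1]
    calc |⟪(hessf (x + u • h) - hessf x) h, h⟫| ≤ ‖(hessf (x + u • h) - hessf x) h‖ * ‖h‖ :=
        abs_real_inner_le_norm _ _
      _ ≤ ‖hessf (x + u • h) - hessf x‖ * ‖h‖ * ‖h‖ := by
          have := (hessf (x + u • h) - hessf x).le_opNorm h
          nlinarith [norm_nonneg h]
      _ ≤ L * ‖x + u • h - x‖ * ‖h‖ * ‖h‖ := by
          exact mul_le_mul_of_nonneg_right (mul_le_mul_of_nonneg_right (hlip (x + u • h) x)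
            (norm_nonneg h)) (norm_nonneg h)
      _ = L * u * ‖h‖ ^ 3 := by
          rw [add_sub_cancel_left, norm_smul, Real.norm_eq_abs, abs_of_nonneg hu]; ring
  -- ψ t - ψ 0 = ∫ χ on [0,t]
  have hFTCψ : ∀ t : ℝ, t ∈ Set.Icc (0:ℝ) 1 → ψ t - ψ 0 = ∫ u in (0:ℝ)..t, χ u := by
    intro t _
    exact (intervalIntegral.integral_eq_sub_of_hasDerivAt (fun u _ => hψ u)
      (hχcont.intervalIntegrable 0 t)).symm
  have hFbound : ∀ t : ℝ, t ∈ Set.Icc (0:ℝ) 1 →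
      |ψ t - ψ 0 - t * χ 0| ≤ L / 2 * t ^ 2 * ‖h‖ ^ 3 := by
    intro t ht
    have ht0 := ht.1
    have e2 : ψ t - ψ 0 - t * χ 0 = ∫ u in (0:ℝ)..t, (χ u - χ 0) := by
      rw [intervalIntegral.integral_sub (hχcont.intervalIntegrable 0 t)
        (intervalIntegrable_const), hFTCψ t ht, intervalIntegral.integral_const]
      simp
    rw [e2]
    calc |∫ u in (0:ℝ)..t, (χ u - χ 0)| ≤ ∫ u in (0:ℝ)..t, |χ u - χ 0| :=
        intervalIntegral.abs_integral_le_integral_abs ht0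
      _ ≤ ∫ u in (0:ℝ)..t, L * u * ‖h‖ ^ 3 := by
          apply intervalIntegral.integral_mono_on ht0
            ((hχcont.sub continuous_const).abs.intervalIntegrable 0 t)
            (((continuous_const.mul continuous_id).mul continuous_const).intervalIntegrable 0 t)
          intro u hu
          exact hχbound u hu.1
      _ = L / 2 * t ^ 2 * ‖h‖ ^ 3 := by
          have : ∫ u in (0:ℝ)..t, L * u * ‖h‖ ^ 3 = (L * ‖h‖ ^ 3) * ∫ u in (0:ℝ)..t, u := by
            rw [← intervalIntegral.integral_const_mul]
            congr 1; funext u; ring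
          rw [this, integral_id]; ring
  -- main FTC
  have hFTCf : f (x + h) - f x = ∫ t in (0:ℝ)..1, ψ t := by
    have := intervalIntegral.integral_eq_sub_of_hasDerivAt (fun t (_ : t ∈ Set.uIcc (0:ℝ) 1) => hφ t)
      (hψcont.intervalIntegrable 0 1)
    simpa using this.symm
  have hψ0 : ψ 0 = ⟪gradf x, h⟫ := by simp [hψdef]
  have hχ0 : χ 0 = ⟪h, hessf x h⟫ := by simp [hχdef, real_inner_comm]
  have emain : f (x + h) - f x - ⟪gradf x, h⟫ - 1 / 2 * ⟪h, hessf x h⟫ =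
      ∫ t in (0:ℝ)..1, (ψ t - ψ 0 - t * χ 0) := by
    rw [intervalIntegral.integral_sub (f := fun t => ψ t - ψ 0) (g := fun t => t * χ 0)
        ((hψcont.sub continuous_const).intervalIntegrable 0 1)
        ((continuous_id'.mul continuous_const).intervalIntegrable 0 1),
      intervalIntegral.integral_sub (f := ψ) (g := fun _ => ψ 0) (hψcont.intervalIntegrable 0 1) intervalIntegrable_const,
      ← hFTCf, intervalIntegral.integral_const]
    have : ∫ t in (0:ℝ)..1, t * χ 0 = χ 0 * ∫ t in (0:ℝ)..1, t := by
      rw [← intervalIntegral.integral_const_mul]; congr 1; funext t; ring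
    rw [this, integral_id, hψ0, hχ0]
    simp only [smul_eq_mul, one_smul]
    ring
  rw [emain]
  calc |∫ t in (0:ℝ)..1, (ψ t - ψ 0 - t * χ 0)| ≤ ∫ t in (0:ℝ)..1, |ψ t - ψ 0 - t * χ 0| :=
      intervalIntegral.abs_integral_le_integral_abs zero_le_one
    _ ≤ ∫ t in (0:ℝ)..1, L / 2 * t ^ 2 * ‖h‖ ^ 3 := by
        apply intervalIntegral.integral_mono_on zero_le_one
          (((hψcont.sub continuous_const).sub (continuous_id.mul continuous_const)).abs.intervalIntegrable 0 1)
          (((continuous_const.mul (continuous_pow 2)).mul continuous_const).intervalIntegrable 0 1)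
        exact hFbound
    _ = L / 6 * ‖h‖ ^ 3 := by
        have : ∫ t in (0:ℝ)..1, L / 2 * t ^ 2 * ‖h‖ ^ 3 =
            (L / 2 * ‖h‖ ^ 3) * ∫ t in (0:ℝ)..1, t ^ 2 := by
          rw [← intervalIntegral.integral_const_mul]; congr 1; funext t; ring
        rw [this, integral_pow]; push_cast; ring
end Taylor

section Alpha
variable {E : Type*} [NormedAddCommGroup E] [InnerProductSpace ℝ E]

lemma alphaHat_mul_sq_ge (β σ ε θ Hmax σM : ℝ) (hβ0 : 0 < β) (hσ : 0 < σ) (hσM : σ ≤ σM)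
    (hHmax : 0 < Hmax) (hθ : 0 < θ) (hε : 0 < ε) (hε1 : ε ≤ 1)
    (g : E) (H : E →L[ℝ] E) (hgε : θ * ε ≤ ‖g‖) (hHb : ‖H‖ ≤ Hmax) :
    θ * min (θ * β / Hmax) (Real.sqrt (3 * θ * β / σM)) * ε ^ 2 ≤
      alphaHat β σ g H * ‖g‖ ^ 2 := by
  have hσM0 : 0 < σM := lt_of_lt_of_le hσ hσM
  have hG : 0 < ‖g‖ := lt_of_lt_of_le (by positivity) hgε
  have hb2 : θ * Real.sqrt (3 * θ * β / σM) * ε ^ 2 ≤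
      Real.sqrt (3 * β / (σ * ‖g‖)) * ‖g‖ ^ 2 := by
    have e1 : θ * Real.sqrt (3 * θ * β / σM) * ε ^ 2 =
        Real.sqrt ((3 * θ * β / σM) * (θ * ε ^ 2) ^ 2) := by
      rw [Real.sqrt_mul (by positivity), Real.sqrt_sq (by positivity)]; ring
    have e2 : Real.sqrt (3 * β / (σ * ‖g‖)) * ‖g‖ ^ 2 =
        Real.sqrt ((3 * β / (σ * ‖g‖)) * (‖g‖ ^ 2) ^ 2) := by
      rw [Real.sqrt_mul (by positivity), Real.sqrt_sq (by positivity)]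
    rw [e1, e2]
    apply Real.sqrt_le_sqrt
    rw [div_mul_eq_mul_div, div_mul_eq_mul_div, div_le_div_iff₀ (by positivity) (by positivity)]
    have h3 : θ ^ 3 * ε ^ 3 ≤ ‖g‖ ^ 3 := by
      calc θ ^ 3 * ε ^ 3 = (θ * ε) ^ 3 := by ring
        _ ≤ ‖g‖ ^ 3 := pow_le_pow_left₀ (by positivity) hgε 3
    have h4 : ε ^ 4 ≤ ε ^ 3 := pow_le_pow_of_le_one hε.le hε1 (by norm_num)
    have s2 : θ ^ 3 * ε ^ 3 * (σ * ‖g‖) ≤ ‖g‖ ^ 3 * (σM * ‖g‖) :=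
      mul_le_mul h3 (mul_le_mul_of_nonneg_right hσM hG.le) (by positivity) (by positivity)
    calc 3 * θ * β * (θ * ε ^ 2) ^ 2 * (σ * ‖g‖) = 3 * β * (θ ^ 3 * ε ^ 4 * (σ * ‖g‖)) := by
          ring
      _ ≤ 3 * β * (θ ^ 3 * ε ^ 3 * (σ * ‖g‖)) := by
          refine mul_le_mul_of_nonneg_left ?_ (by positivity)
          exact mul_le_mul_of_nonneg_right (mul_le_mul_of_nonneg_left h4 (by positivity))
            (by positivity)
      _ ≤ 3 * β * (‖g‖ ^ 3 * (σM * ‖g‖)) := mul_le_mul_of_nonneg_left s2 (by positivity)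
      _ = 3 * β * (‖g‖ ^ 2) ^ 2 * σM := by ring
  unfold alphaHat
  split_ifs with hH0
  · calc θ * min (θ * β / Hmax) (Real.sqrt (3 * θ * β / σM)) * ε ^ 2 ≤
        θ * Real.sqrt (3 * θ * β / σM) * ε ^ 2 := by
          gcongr
          exact min_le_right _ _
      _ ≤ _ := hb2
  · have hH : 0 < ‖H‖ := norm_pos_iff.mpr hH0
    have hb1 : θ * (θ * β / Hmax) * ε ^ 2 ≤ β / ‖H‖ * ‖g‖ ^ 2 := by
      have e3 : θ * (θ * β / Hmax) * ε ^ 2 = θ * (θ * β) * ε ^ 2 / Hmax := by ring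
      have e4 : β / ‖H‖ * ‖g‖ ^ 2 = β * ‖g‖ ^ 2 / ‖H‖ := by ring
      rw [e3, e4, div_le_div_iff₀ hHmax hH]
      have h5 : (θ * ε) ^ 2 ≤ ‖g‖ ^ 2 := pow_le_pow_left₀ (by positivity) hgε 2
      have s3 : (θ * ε) ^ 2 * ‖H‖ ≤ ‖g‖ ^ 2 * Hmax :=
        mul_le_mul h5 hHb (norm_nonneg H) (by positivity)
      nlinarith [mul_le_mul_of_nonneg_left s3 hβ0.le]
    rw [min_mul_of_nonneg _ _ (by positivity : (0:ℝ) ≤ ‖g‖ ^ 2)]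
    apply le_min
    · refine le_trans ?_ hb1
      gcongr
      exact min_le_left _ _
    · refine le_trans ?_ hb2
      gcongr
      exact min_le_right _ _

end Alpha
theorem stmt17 (n : ℕ) (hn : 0 < n)
    (f : EuclideanSpace ℝ (Fin n) → ℝ)
    (gradf : EuclideanSpace ℝ (Fin n) → EuclideanSpace ℝ (Fin n))
    (hessf : EuclideanSpace ℝ (Fin n) → (EuclideanSpace ℝ (Fin n) →L[ℝ] EuclideanSpace ℝ (Fin n)))
    (hf : ContDiff ℝ 2 f)
    (hgradf : ∀ x, HasGradientAt f (gradf x) x)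
    (hhessf : ∀ x, HasFDerivAt gradf (hessf x) x)
    (L : ℝ) (hL : 0 < L)
    (hlipL : ∀ x y, ‖hessf x - hessf y‖ ≤ L * ‖x - y‖)
    (σmin σ₀ η₁ η₂ γ₁ γ₂ γ₃ τ β θ : ℝ)
    (hσmin : 0 < σmin) (hσ₀ : σmin ≤ σ₀)
    (hη₁0 : 0 < η₁) (hη₁₂ : η₁ ≤ η₂) (hη₂1 : η₂ < 1)
    (hγ₁0 : 0 < γ₁) (hγ₁1 : γ₁ ≤ 1) (hγ₂ : 1 < γ₂) (hγ₂₃ : γ₂ ≤ γ₃)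
    (hτ : 0 ≤ τ) (hβ0 : 0 < β) (hβ1 : β < 1) (hθ0 : 0 < θ) (hθ1 : θ ≤ 1)
    (x : ℕ → EuclideanSpace ℝ (Fin n)) (I : ℕ → Finset (Fin n))
    (s : ∀ k : ℕ, EuclideanSpace ℝ ↥(I k)) (σ : ℕ → ℝ) (ρ : ℕ → ℝ)
    (hσzero : σ 0 = σ₀) (hσpos : ∀ k, 0 < σ k)
    (hgne : ∀ k, gradf (x k) ≠ 0)
    (hgreedy : ∀ k, θ * ‖gradf (x k)‖ ≤ ‖blockRestr (I k) (gradf (x k))‖)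
    (hstepg : ∀ k, ‖cubicModelGrad (blockRestr (I k) (gradf (x k)))
        (blockHess (I k) (hessf (x k))) (σ k) (s k)‖ ≤ τ * ‖s k‖ ^ 2)
    (hstepm : ∀ k, cubicModel (f (x k)) (blockRestr (I k) (gradf (x k)))
        (blockHess (I k) (hessf (x k))) (σ k) (s k) ≤
      cubicModel (f (x k)) (blockRestr (I k) (gradf (x k)))
        (blockHess (I k) (hessf (x k))) (σ k)
        (sHat β (σ k) (blockRestr (I k) (gradf (x k))) (blockHess (I k) (hessf (x k)))))
    (hρ : ∀ k, ρ k = (f (x k) - f (x k + blockIncl (I k) (s k))) /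
      (quadModel (f (x k)) (blockRestr (I k) (gradf (x k))) (blockHess (I k) (hessf (x k))) 0 -
       quadModel (f (x k)) (blockRestr (I k) (gradf (x k))) (blockHess (I k) (hessf (x k))) (s k)))
    (hx : ∀ k, x (k + 1) = if η₁ ≤ ρ k then x k + blockIncl (I k) (s k) else x k)
    (hσ1 : ∀ k, η₂ ≤ ρ k → max σmin (γ₁ * σ k) ≤ σ (k + 1) ∧ σ (k + 1) ≤ σ k)
    (hσ2 : ∀ k, η₁ ≤ ρ k → ρ k < η₂ → σ k ≤ σ (k + 1) ∧ σ (k + 1) ≤ γ₂ * σ k)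
    (hσ3 : ∀ k, ρ k < η₁ → γ₂ * σ k ≤ σ (k + 1) ∧ σ (k + 1) ≤ γ₃ * σ k)
    (fmin Hmax : ℝ) (hHmax : 0 < Hmax)
    (hfmin : ∀ y, f y ≤ f (x 0) → fmin ≤ f y)
    (hHb : ∀ y, f y ≤ f (x 0) → ‖hessf y‖ ≤ Hmax)
    (ε : ℝ) (hε0 : 0 < ε) (hε1 : ε ≤ 1) :
    ({k : ℕ | ε ≤ ‖gradf (x k)‖} ∩ {k : ℕ | η₁ ≤ ρ k}).Finite ∧
      (({k : ℕ | ε ≤ ‖gradf (x k)‖} ∩ {k : ℕ | η₁ ≤ ρ k}).ncard : ℝ) ≤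
        (f (x 0) - fmin) /
            (θ * η₁ * (1 - β) *
              min (θ * β / Hmax) (Real.sqrt (3 * θ * β / max σ₀ (γ₃ * L / (1 - η₂))))) *
          ε ^ (-(2 : ℝ)) := by
  classical
  -- opaque abbreviations (avoid let-bound fvars for linarith's sake)
  obtain ⟨g, hgdef⟩ : ∃ gg : ∀ k : ℕ, EuclideanSpace ℝ ↥(I k),
      ∀ k, gg k = blockRestr (I k) (gradf (x k)) :=
    ⟨_, fun k => rfl⟩
  obtain ⟨Hk, hHkdef⟩ : ∃ HH : ∀ k : ℕ,
      EuclideanSpace ℝ ↥(I k) →L[ℝ] EuclideanSpace ℝ ↥(I k),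
      ∀ k, HH k = blockHess (I k) (hessf (x k)) :=
    ⟨_, fun k => rfl⟩
  obtain ⟨α, hαdef⟩ : ∃ aa : ℕ → ℝ, ∀ k, aa k = alphaHat β (σ k) (g k) (Hk k) :=
    ⟨_, fun k => rfl⟩
  obtain ⟨Δ, hΔdef⟩ : ∃ DD : ℕ → ℝ, ∀ k, DD k =
      quadModel (f (x k)) (g k) (Hk k) 0 - quadModel (f (x k)) (g k) (Hk k) (s k) :=
    ⟨_, fun k => rfl⟩
  obtain ⟨σM, hσMdef⟩ : ∃ y : ℝ, y = max σ₀ (γ₃ * L / (1 - η₂)) := ⟨_, rfl⟩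
  -- primed hypotheses in terms of the abbreviations
  have hgreedy' : ∀ k, θ * ‖gradf (x k)‖ ≤ ‖g k‖ := fun k => by
    rw [hgdef]; exact hgreedy k
  have hstepm' : ∀ k, cubicModel (f (x k)) (g k) (Hk k) (σ k) (s k) ≤
      cubicModel (f (x k)) (g k) (Hk k) (σ k) (sHat β (σ k) (g k) (Hk k)) := fun k => by
    rw [hgdef, hHkdef]; exact hstepm k
  have hρ' : ∀ k, ρ k = (f (x k) - f (x k + blockIncl (I k) (s k))) / Δ k := fun k => by
    rw [hΔdef, hgdef, hHkdef]; exact hρ k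
  have h1η₂ : 0 < 1 - η₂ := by linarith only [hη₂1]
  have hσM0 : 0 < σM := by
    rw [hσMdef]
    exact lt_of_lt_of_le (lt_of_lt_of_le hσmin hσ₀) (le_max_left _ _)
  -- basic positivity facts
  have hgpos : ∀ k, 0 < ‖g k‖ := fun k =>
    lt_of_lt_of_le (mul_pos hθ0 (norm_pos_iff.mpr (hgne k))) (hgreedy' k)
  have hgk0 : ∀ k, g k ≠ 0 := fun k => norm_pos_iff.mp (hgpos k)
  have hαpos : ∀ k, 0 < α k := fun k => by
    rw [hαdef]
    exact alphaHat_pos β (σ k) hβ0 (hσpos k) (g k) (hgk0 k) (Hk k)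
  have hq0 : ∀ k, quadModel (f (x k)) (g k) (Hk k) 0 = f (x k) := fun k => by
    simp [quadModel]
  -- model decrease
  have hΔge : ∀ k, (1 - β) * α k * ‖g k‖ ^ 2 + σ k / 6 * ‖s k‖ ^ 3 ≤ Δ k := by
    intro k
    have h0 := le_trans (hstepm' k)
      (model_decrease (f (x k)) β (σ k) hβ0 (hσpos k) (g k) (hgk0 k) (Hk k))
    rw [cubicModel] at h0
    rw [hΔdef k, hq0, ← hαdef k] at *
    linarith only [h0]
  have hΔpos : ∀ k, 0 < Δ k := by
    intro k
    have h0 := hΔge k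
    have h1 : 0 < (1 - β) * α k * ‖g k‖ ^ 2 := by
      have hb' : 0 < 1 - β := by linarith only [hβ1]
      have := hαpos k; have := hgpos k; positivity
    have h2 : 0 ≤ σ k / 6 * ‖s k‖ ^ 3 :=
      mul_nonneg (by linarith only [hσpos k]) (by positivity)
    linarith only [h0, h1, h2]
  have hsne : ∀ k, s k ≠ 0 := by
    intro k hs
    have h2 := hΔpos k
    rw [hΔdef k, hs, sub_self] at h2
    exact lt_irrefl 0 h2
  -- relation between ρ and function decrease
  have hρΔ : ∀ k, ρ k * Δ k = f (x k) - f (x k + blockIncl (I k) (s k)) := by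
    intro k
    rw [hρ' k]
    exact div_mul_cancel₀ _ (ne_of_gt (hΔpos k))
  have hfd : ∀ k, f (x (k + 1)) ≤ f (x k) := by
    intro k
    rw [hx k]
    split_ifs with h
    · have h2 : η₁ * Δ k ≤ ρ k * Δ k := mul_le_mul_of_nonneg_right h (hΔpos k).le
      have h3 := hρΔ k
      have h4 : 0 < η₁ * Δ k := mul_pos hη₁0 (hΔpos k)
      linarith only [h2, h3, h4]
    · exact le_refl _
  have hfS : ∀ k, η₁ ≤ ρ k → η₁ * Δ k ≤ f (x k) - f (x (k + 1)) := by
    intro k h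
    rw [hx k, if_pos h]
    have h2 : η₁ * Δ k ≤ ρ k * Δ k := mul_le_mul_of_nonneg_right h (hΔpos k).le
    linarith only [h2, hρΔ k]
  have hflevel : ∀ k, f (x k) ≤ f (x 0) := by
    intro k
    induction k with
    | zero => exact le_refl _
    | succ m ih => exact le_trans (hfd m) ih
  have hHkb : ∀ k, ‖Hk k‖ ≤ Hmax := fun k => by
    rw [hHkdef]
    exact le_trans (norm_blockHess_le (I k) (hessf (x k))) (hHb (x k) (hflevel k))
  -- Taylor bound
  have htaylor : ∀ k, f (x k + blockIncl (I k) (s k)) ≤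
      quadModel (f (x k)) (g k) (Hk k) (s k) + L / 6 * ‖s k‖ ^ 3 := by
    intro k
    set h := blockIncl (I k) (s k) with hhdef
    have hnh : ‖h‖ = ‖s k‖ := norm_blockIncl (I k) (s k)
    have hq : quadModel (f (x k)) (g k) (Hk k) (s k) =
        f (x k) + ⟪gradf (x k), h⟫ + 1 / 2 * ⟪h, hessf (x k) h⟫ := by
      rw [quadModel]
      congr 2
      · rw [hgdef]
        rw [real_inner_comm, ← inner_blockIncl, real_inner_comm]
      · rw [hHkdef, inner_blockHess]
    have ht := taylor_two f gradf hessf hgradf hhessf L hL.le hlipL (x k) h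
    rw [hnh] at ht
    rw [hq]
    have := (abs_le.mp ht).2
    linarith only [this]
  -- σ is bounded
  have hkey : ∀ k, ρ k < η₂ → (1 - η₂) * σ k ≤ L := by
    intro k hk
    by_contra hcon
    push_neg at hcon
    have hs3 : 0 < ‖s k‖ ^ 3 := pow_pos (norm_pos_iff.mpr (hsne k)) 3
    have hΔs : σ k / 6 * ‖s k‖ ^ 3 ≤ Δ k := by
      have h0 := hΔge k
      have h1 : 0 ≤ (1 - β) * α k * ‖g k‖ ^ 2 := by
        have hb' : 0 < 1 - β := by linarith only [hβ1]
        have := hαpos k; positivity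
      linarith only [h0, h1]
    have hbig : η₂ * Δ k ≤ ρ k * Δ k := by
      rw [hρΔ k]
      have h1 : L / 6 * ‖s k‖ ^ 3 ≤ (1 - η₂) * (σ k / 6 * ‖s k‖ ^ 3) := by
        have h1' := mul_le_mul_of_nonneg_right hcon.le
          (by positivity : (0:ℝ) ≤ ‖s k‖ ^ 3 / 6)
        linarith only [h1']
      have h2 : (1 - η₂) * (σ k / 6 * ‖s k‖ ^ 3) ≤ (1 - η₂) * Δ k :=
        mul_le_mul_of_nonneg_left hΔs h1η₂.le
      have h3 := htaylor k
      have hΔk : Δ k = f (x k) - quadModel (f (x k)) (g k) (Hk k) (s k) := by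
        rw [hΔdef k, hq0]
      linarith only [h1, h2, h3, hΔk]
    have := le_of_mul_le_mul_right hbig (hΔpos k)
    linarith only [this, hk]
  have hσb : ∀ k, σ k ≤ σM := by
    intro k
    induction k with
    | zero => rw [hσzero, hσMdef]; exact le_max_left _ _
    | succ m ih =>
      by_cases hc : η₂ ≤ ρ m
      · exact le_trans (hσ1 m hc).2 ih
      · push_neg at hc
        have hσm : σ m ≤ L / (1 - η₂) := by
          rw [le_div_iff₀ h1η₂]
          linarith only [hkey m hc]
        have hstep : σ (m + 1) ≤ γ₃ * σ m := by
          by_cases hc2 : η₁ ≤ ρ m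
          · exact le_trans (hσ2 m hc2 hc).2
              (mul_le_mul_of_nonneg_right hγ₂₃ (hσpos m).le)
          · push_neg at hc2
            exact (hσ3 m hc2).2
        calc σ (m + 1) ≤ γ₃ * σ m := hstep
          _ ≤ γ₃ * (L / (1 - η₂)) := mul_le_mul_of_nonneg_left hσm
              (by linarith only [hγ₂, hγ₂₃] : (0:ℝ) ≤ γ₃)
          _ = γ₃ * L / (1 - η₂) := by ring
          _ ≤ σM := by rw [hσMdef]; exact le_max_right _ _
  -- per-iteration decrease on good successful iterations
  obtain ⟨c₁, hc₁def⟩ : ∃ y : ℝ, y = θ * η₁ * (1 - β) *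
      min (θ * β / Hmax) (Real.sqrt (3 * θ * β / σM)) := ⟨_, rfl⟩
  have hminpos : 0 < min (θ * β / Hmax) (Real.sqrt (3 * θ * β / σM)) := by
    apply lt_min
    · positivity
    · exact Real.sqrt_pos.mpr (div_pos (by positivity) hσM0)
  have hc₁pos : 0 < c₁ := by
    rw [hc₁def]
    have h1 : 0 < 1 - β := by linarith only [hβ1]
    exact mul_pos (mul_pos (mul_pos hθ0 hη₁0) h1) hminpos
  have hdec : ∀ k, ε ≤ ‖gradf (x k)‖ → η₁ ≤ ρ k →
      c₁ * ε ^ 2 ≤ f (x k) - f (x (k + 1)) := by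
    intro k hkε hkS
    have hgε : θ * ε ≤ ‖g k‖ :=
      le_trans (mul_le_mul_of_nonneg_left hkε hθ0.le) (hgreedy' k)
    have halow := alphaHat_mul_sq_ge β (σ k) ε θ Hmax σM hβ0 (hσpos k) (hσb k)
      hHmax hθ0 hε0 hε1 (g k) (Hk k) hgε (hHkb k)
    rw [← hαdef k] at halow
    have h1 : c₁ * ε ^ 2 ≤ η₁ * ((1 - β) * α k * ‖g k‖ ^ 2) := by
      rw [hc₁def]
      have h2 : 0 < 1 - β := by linarith only [hβ1]
      calc θ * η₁ * (1 - β) * min (θ * β / Hmax) (Real.sqrt (3 * θ * β / σM)) * ε ^ 2 =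
          η₁ * (1 - β) * (θ * min (θ * β / Hmax) (Real.sqrt (3 * θ * β / σM)) * ε ^ 2) := by
            ring
        _ ≤ η₁ * (1 - β) * (α k * ‖g k‖ ^ 2) :=
            mul_le_mul_of_nonneg_left halow (by positivity)
        _ = η₁ * ((1 - β) * α k * ‖g k‖ ^ 2) := by ring
    have h3 : η₁ * ((1 - β) * α k * ‖g k‖ ^ 2) ≤ η₁ * Δ k := by
      refine mul_le_mul_of_nonneg_left ?_ hη₁0.le
      have h5 : 0 ≤ σ k / 6 * ‖s k‖ ^ 3 :=
        mul_nonneg (by linarith only [hσpos k]) (by positivity)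
      linarith only [hΔge k, h5]
    exact le_trans h1 (le_trans h3 (hfS k hkS))
  -- counting argument
  obtain ⟨A, hAdef⟩ : ∃ B : Set ℕ,
      B = {k : ℕ | ε ≤ ‖gradf (x k)‖} ∩ {k : ℕ | η₁ ≤ ρ k} := ⟨_, rfl⟩
  have hmemA : ∀ k, k ∈ A ↔ ε ≤ ‖gradf (x k)‖ ∧ η₁ ≤ ρ k := fun k => by
    rw [hAdef]; exact Iff.rfl
  have hcount : ∀ N : ℕ,
      c₁ * ε ^ 2 * (((Finset.range N).filter (· ∈ A)).card : ℝ) ≤ f (x 0) - f (x N) := by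
    intro N
    induction N with
    | zero => simp
    | succ m ih =>
      rw [Finset.range_add_one, Finset.filter_insert]
      by_cases hm : m ∈ A
      · rw [if_pos hm, Finset.card_insert_of_notMem (by simp)]
        have hd := hdec m ((hmemA m).mp hm).1 ((hmemA m).mp hm).2
        push_cast
        have he : c₁ * ε ^ 2 *
            ((((Finset.range m).filter (· ∈ A)).card : ℝ) + 1) =
            c₁ * ε ^ 2 * (((Finset.range m).filter (· ∈ A)).card : ℝ) + c₁ * ε ^ 2 := by
          ring
        rw [he]
        linarith only [hd, ih]
      · rw [if_neg hm]
        linarith only [ih, hfd m]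
  have hcard : ∀ N : ℕ,
      (((Finset.range N).filter (· ∈ A)).card : ℝ) ≤ (f (x 0) - fmin) / (c₁ * ε ^ 2) := by
    intro N
    rw [le_div_iff₀ (by positivity)]
    have h6 := hfmin (x N) (hflevel N)
    linarith only [hcount N, h6]
  have hsub : ∀ t : Finset ℕ, ↑t ⊆ A → (t.card : ℝ) ≤ (f (x 0) - fmin) / (c₁ * ε ^ 2) := by
    intro t ht
    have hsub2 : t ⊆ (Finset.range (t.sup id + 1)).filter (· ∈ A) := by
      intro b hb
      rw [Finset.mem_filter, Finset.mem_range]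
      exact ⟨Nat.lt_succ_of_le (Finset.le_sup (f := id) hb), ht hb⟩
    exact le_trans (by exact_mod_cast Finset.card_le_card hsub2) (hcard _)
  have hfin : A.Finite := by
    by_contra hinf
    have hinf' : A.Infinite := hinf
    obtain ⟨t, ht, hcardt⟩ := hinf'.exists_subset_card_eq
      (Nat.floor ((f (x 0) - fmin) / (c₁ * ε ^ 2)) + 1)
    have h7 := hsub t ht
    rw [hcardt] at h7
    push_cast at h7
    linarith only [h7, Nat.lt_floor_add_one ((f (x 0) - fmin) / (c₁ * ε ^ 2))]
  have hncard : (A.ncard : ℝ) ≤ (f (x 0) - fmin) / (c₁ * ε ^ 2) := by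
    rw [Set.ncard_eq_toFinset_card A hfin]
    exact hsub hfin.toFinset (by simp)
  have hrpow : ε ^ (-(2 : ℝ)) = (ε ^ 2)⁻¹ := by
    rw [show (-(2 : ℝ)) = -((2 : ℕ) : ℝ) by norm_num, Real.rpow_neg hε0.le, Real.rpow_natCast]
  rw [← hAdef, ← hσMdef]
  refine ⟨hfin, ?_⟩
  calc (A.ncard : ℝ) ≤ (f (x 0) - fmin) / (c₁ * ε ^ 2) := hncard
    _ = (f (x 0) - fmin) /
          (θ * η₁ * (1 - β) * min (θ * β / Hmax) (Real.sqrt (3 * θ * β / σM))) *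
          ε ^ (-(2 : ℝ)) := by
        rw [hrpow, hc₁def, ← div_div, div_eq_mul_inv]

end
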